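/- Let V be a finite type, M ≥ 1 an integer, w : V → V → ℤ with |w u v| ≤ M for all u ≠ v, H = 10M, and let w₆ be the six-layer graph on V × Fin 6. Then ⨆_{p,q : V} dist_{w₆}((p,0),(q,5)) ≥ 5H if and only if there exists a vertex v : V that lies in no negative triangle, i.e., for all u, z with v, u, z pairwise distinct, w v u + w u z + w z v ≥ 0. -/

import Mathlib

/-- Weight of a walk starting at `u` and visiting the vertices of `p` in order. -/
def walkWeight {V : Type*} (w : V → V → ℕ∞) : V → List V → ℕ∞
  | _, [] => 0
  | u, x :: xs => w u x + walkWeight w x xs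

/-- Shortest-path distance: infimum of weights of walks from `u` to `v`. -/
noncomputable def gdist {V : Type*} (w : V → V → ℕ∞) (u v : V) : ℕ∞ :=
  ⨅ (p : List V) (_ : (u :: p).getLast (List.cons_ne_nil u p) = v), walkWeight w u p

/-- Eccentricity of a vertex. -/
noncomputable def ecc {V : Type*} (w : V → V → ℕ∞) (v : V) : ℕ∞ :=
  ⨆ u, gdist w v u

/-- Radius. -/
noncomputable def rad {V : Type*} (w : V → V → ℕ∞) : ℕ∞ :=
  ⨅ v, ecc w v

/-- Diameter. -/
noncomputable def diam {V : Type*} (w : V → V → ℕ∞) : ℕ∞ :=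
  ⨆ v, ecc w v

/-- Six-layer graph on `V × Fin 6` (parts X, A, B, C, D, Y), with `H = 10 * M`:
edges `(v,0) → (v,1)` and `(v,4) → (v,5)` of weight `H`; edges `(u,i) → (v,i+1)` of
weight `H + w u v` for `i ∈ {1,2,3}` and `u ≠ v`; edges `(u,1) → (v,4)` of weight `0`
for `u ≠ v`; all other weights `⊤`. -/
def layer6 {V : Type*} [DecidableEq V] (w : V → V → ℤ) (M : ℤ) :
    V × Fin 6 → V × Fin 6 → ℕ∞ := fun p q =>
  if p.1 = q.1 ∧ ((p.2 = 0 ∧ q.2 = 1) ∨ (p.2 = 4 ∧ q.2 = 5)) then ((10 * M).toNat : ℕ∞)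
  else if p.1 ≠ q.1 ∧ 1 ≤ (p.2 : ℕ) ∧ (p.2 : ℕ) ≤ 3 ∧ (q.2 : ℕ) = (p.2 : ℕ) + 1 then
    ((10 * M + w p.1 q.1).toNat : ℕ∞)
  else if p.1 ≠ q.1 ∧ p.2 = 1 ∧ q.2 = 4 then 0
  else ⊤

section Aux
variable {V : Type*} [DecidableEq V] (w : V → V → ℤ) (M : ℤ)

lemma l6_from0 (v : V) (x : V × Fin 6) :
    layer6 w M (v, 0) x = if x = (v, 1) then ((10 * M).toNat : ℕ∞) else ⊤ := by
  obtain ⟨b, j⟩ := x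
  by_cases h : v = b <;> fin_cases j <;>
    simp_all [layer6, Prod.ext_iff, eq_comm, Fin.ext_iff, show ((3:Fin 6):ℕ)=3 from rfl,
      show ((4:Fin 6):ℕ)=4 from rfl, show ((5:Fin 6):ℕ)=5 from rfl]

lemma l6_from1 (v : V) (x : V × Fin 6) :
    layer6 w M (v, 1) x =
      if v ≠ x.1 ∧ x.2 = 2 then ((10 * M + w v x.1).toNat : ℕ∞)
      else if v ≠ x.1 ∧ x.2 = 4 then 0 else ⊤ := by
  obtain ⟨b, j⟩ := x
  by_cases h : v = b <;> fin_cases j <;>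
    simp_all [layer6, Prod.ext_iff, eq_comm, Fin.ext_iff, show ((3:Fin 6):ℕ)=3 from rfl,
      show ((4:Fin 6):ℕ)=4 from rfl, show ((5:Fin 6):ℕ)=5 from rfl]

lemma l6_from2 (v : V) (x : V × Fin 6) :
    layer6 w M (v, 2) x =
      if v ≠ x.1 ∧ x.2 = 3 then ((10 * M + w v x.1).toNat : ℕ∞) else ⊤ := by
  obtain ⟨b, j⟩ := x
  by_cases h : v = b <;> fin_cases j <;>
    simp_all [layer6, Prod.ext_iff, eq_comm, Fin.ext_iff, show ((3:Fin 6):ℕ)=3 from rfl,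
      show ((4:Fin 6):ℕ)=4 from rfl, show ((5:Fin 6):ℕ)=5 from rfl]

lemma l6_from3 (v : V) (x : V × Fin 6) :
    layer6 w M (v, 3) x =
      if v ≠ x.1 ∧ x.2 = 4 then ((10 * M + w v x.1).toNat : ℕ∞) else ⊤ := by
  obtain ⟨b, j⟩ := x
  by_cases h : v = b <;> fin_cases j <;>
    simp_all [layer6, Prod.ext_iff, eq_comm, Fin.ext_iff, show ((3:Fin 6):ℕ)=3 from rfl,
      show ((4:Fin 6):ℕ)=4 from rfl, show ((5:Fin 6):ℕ)=5 from rfl]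

lemma l6_from4 (v : V) (x : V × Fin 6) :
    layer6 w M (v, 4) x = if x = (v, 5) then ((10 * M).toNat : ℕ∞) else ⊤ := by
  obtain ⟨b, j⟩ := x
  by_cases h : v = b <;> fin_cases j <;>
    simp_all [layer6, Prod.ext_iff, eq_comm, Fin.ext_iff, show ((3:Fin 6):ℕ)=3 from rfl,
      show ((4:Fin 6):ℕ)=4 from rfl, show ((5:Fin 6):ℕ)=5 from rfl]

lemma l6_from5 (v : V) (x : V × Fin 6) : layer6 w M (v, 5) x = ⊤ := by
  obtain ⟨b, j⟩ := x
  by_cases h : v = b <;> fin_cases j <;>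
    simp_all [layer6, Prod.ext_iff, eq_comm, Fin.ext_iff, show ((3:Fin 6):ℕ)=3 from rfl,
      show ((4:Fin 6):ℕ)=4 from rfl, show ((5:Fin 6):ℕ)=5 from rfl]

-- layer 4 lower bound
lemma lb4 (d v : V) (p : List (V × Fin 6))
    (hp : (((d,(4:Fin 6))) :: p).getLast (List.cons_ne_nil _ p) = (v,5)) :
    walkWeight (layer6 w M) (d,4) p = ⊤ ∨
      (d = v ∧ ((10*M).toNat : ℕ∞) ≤ walkWeight (layer6 w M) (d,4) p) := by
  match p with
  | [] => simp [List.getLast, Prod.ext_iff] at hp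
  | z :: p2 =>
    rw [List.getLast_cons (List.cons_ne_nil _ _)] at hp
    simp only [walkWeight]
    rw [l6_from4]
    split_ifs with h1
    · subst h1
      match p2 with
      | [] =>
        simp only [List.getLast, Prod.ext_iff] at hp
        right
        exact ⟨hp.1, by simp [walkWeight]⟩
      | t :: p3 =>
        left
        simp only [walkWeight]
        rw [l6_from5]
        simp
    · left; simp

lemma lb3 (c v : V) (p : List (V × Fin 6))
    (hp : (((c,(3:Fin 6))) :: p).getLast (List.cons_ne_nil _ p) = (v,5)) :
    walkWeight (layer6 w M) (c,3) p = ⊤ ∨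
      (c ≠ v ∧ ((10*M + w c v).toNat : ℕ∞) + ((10*M).toNat : ℕ∞) ≤
        walkWeight (layer6 w M) (c,3) p) := by
  match p, hp with
  | [], hp => simp [List.getLast, Prod.ext_iff] at hp
  | t :: p2, hp =>
    rw [List.getLast_cons (List.cons_ne_nil _ _)] at hp
    obtain ⟨tb, tj⟩ := t
    simp only [walkWeight]
    rw [l6_from3]
    split_ifs with h1
    · obtain ⟨hne, h2⟩ := h1
      simp only at h2
      subst h2
      rcases lb4 w M tb v p2 hp with h | ⟨rfl, hge⟩
      · left; rw [h]; simp
      · right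
        exact ⟨hne, add_le_add_right hge _⟩
    · left; simp

lemma lb2 (b v : V) (p : List (V × Fin 6))
    (hp : (((b,(2:Fin 6))) :: p).getLast (List.cons_ne_nil _ p) = (v,5)) :
    walkWeight (layer6 w M) (b,2) p = ⊤ ∨
      ∃ c, b ≠ c ∧ c ≠ v ∧
        ((10*M + w b c).toNat : ℕ∞) + (((10*M + w c v).toNat : ℕ∞) + ((10*M).toNat : ℕ∞)) ≤
          walkWeight (layer6 w M) (b,2) p := by
  match p, hp with
  | [], hp => simp [List.getLast, Prod.ext_iff] at hp
  | t :: p2, hp =>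
    rw [List.getLast_cons (List.cons_ne_nil _ _)] at hp
    obtain ⟨tb, tj⟩ := t
    simp only [walkWeight]
    rw [l6_from2]
    split_ifs with h1
    · obtain ⟨hne, h2⟩ := h1
      simp only at h2
      subst h2
      rcases lb3 w M tb v p2 hp with h | ⟨hnv, hge⟩
      · left; rw [h]; simp
      · right
        exact ⟨tb, hne, hnv, add_le_add_right hge _⟩
    · left; simp

lemma lb1 (v : V) (p : List (V × Fin 6))
    (hp : (((v,(1:Fin 6))) :: p).getLast (List.cons_ne_nil _ p) = (v,5)) :
    walkWeight (layer6 w M) (v,1) p = ⊤ ∨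
      ∃ b c, v ≠ b ∧ b ≠ c ∧ c ≠ v ∧
        ((10*M + w v b).toNat : ℕ∞) + (((10*M + w b c).toNat : ℕ∞) +
          (((10*M + w c v).toNat : ℕ∞) + ((10*M).toNat : ℕ∞))) ≤
          walkWeight (layer6 w M) (v,1) p := by
  match p, hp with
  | [], hp => simp [List.getLast, Prod.ext_iff] at hp
  | t :: p2, hp =>
    rw [List.getLast_cons (List.cons_ne_nil _ _)] at hp
    obtain ⟨tb, tj⟩ := t
    simp only [walkWeight]
    rw [l6_from1]
    split_ifs with h1 h2
    · obtain ⟨hne, h2'⟩ := h1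
      simp only at h2'
      subst h2'
      rcases lb2 w M tb v p2 hp with h | ⟨c, hbc, hcv, hge⟩
      · left; rw [h]; simp
      · right
        exact ⟨tb, c, hne, hbc, hcv, add_le_add_right hge _⟩
    · obtain ⟨hne, h2'⟩ := h2
      simp only at h2'
      subst h2'
      rcases lb4 w M tb v p2 hp with h | ⟨rfl, _⟩
      · left; rw [h]; simp
      · exact absurd rfl hne
    · left; simp

lemma walk_lb (hM : 1 ≤ M) (hbound : ∀ u v : V, u ≠ v → |w u v| ≤ M) (v : V)
    (htri : ∀ u z : V, v ≠ u → v ≠ z → u ≠ z → 0 ≤ w v u + w u z + w z v)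
    (p : List (V × Fin 6))
    (hp : (((v,(0:Fin 6))) :: p).getLast (List.cons_ne_nil _ p) = (v,5)) :
    ((50*M).toNat : ℕ∞) ≤ walkWeight (layer6 w M) (v,0) p := by
  match p, hp with
  | [], hp => simp [List.getLast, Prod.ext_iff] at hp
  | t :: p2, hp =>
    rw [List.getLast_cons (List.cons_ne_nil _ _)] at hp
    simp only [walkWeight]
    rw [l6_from0]
    split_ifs with h1
    · subst h1
      rcases lb1 w M v p2 hp with h | ⟨b, c, hvb, hbc, hcv, hge⟩
      · rw [h]; simp
      · refine le_trans ?_ (add_le_add_right hge _)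
        have hb1 := abs_le.mp (hbound v b hvb)
        have hb2 := abs_le.mp (hbound b c hbc)
        have hb3 := abs_le.mp (hbound c v hcv)
        have ht := htri b c hvb (Ne.symm hcv) hbc
        rw [← Nat.cast_add, ← Nat.cast_add, ← Nat.cast_add, ← Nat.cast_add, Nat.cast_le]
        omega
    · simp

lemma ub_ne (p q : V) (hpq : p ≠ q) :
    gdist (layer6 w M) (p,0) (q,5) ≤ ((20*M).toNat : ℕ∞) := by
  have hd : gdist (layer6 w M) (p,0) (q,5) ≤
      walkWeight (layer6 w M) (p,0) [(p,1),(q,4),(q,5)] := by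
    unfold gdist
    refine iInf₂_le [(p,1),(q,4),(q,5)] ?_
    rfl
  refine le_trans hd ?_
  simp only [walkWeight, l6_from0, l6_from1, l6_from4]
  simp [hpq]
  rw [← Nat.cast_add, Nat.cast_le]
  omega

lemma ub_tri (hM : 1 ≤ M) (hbound : ∀ u v : V, u ≠ v → |w u v| ≤ M)
    (p u z : V) (hpu : p ≠ u) (huz : u ≠ z) (hzp : z ≠ p) :
    gdist (layer6 w M) (p,0) (p,5) ≤ ((50*M + (w p u + w u z + w z p)).toNat : ℕ∞) := by
  have hd : gdist (layer6 w M) (p,0) (p,5) ≤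
      walkWeight (layer6 w M) (p,0) [(p,1),(u,2),(z,3),(p,4),(p,5)] := by
    unfold gdist
    refine iInf₂_le [(p,1),(u,2),(z,3),(p,4),(p,5)] ?_
    rfl
  refine le_trans hd ?_
  simp only [walkWeight, l6_from0, l6_from1, l6_from2, l6_from3, l6_from4]
  simp [hpu, huz, hzp]
  have hb1 := abs_le.mp (hbound p u hpu)
  have hb2 := abs_le.mp (hbound u z huz)
  have hb3 := abs_le.mp (hbound z p hzp)
  rw [← Nat.cast_add, ← Nat.cast_add, ← Nat.cast_add, ← Nat.cast_add, Nat.cast_le]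
  omega

end Aux

theorem stmt14 {V : Type*} [Fintype V] [DecidableEq V] (M : ℤ) (hM : 1 ≤ M)
    (w : V → V → ℤ) (hbound : ∀ u v : V, u ≠ v → |w u v| ≤ M) :
    ((50 * M).toNat : ℕ∞) ≤ (⨆ (p : V) (q : V), gdist (layer6 w M) (p, 0) (q, 5)) ↔
      ∃ v : V, ∀ u z : V, v ≠ u → v ≠ z → u ≠ z → 0 ≤ w v u + w u z + w z v := by
  constructor
  · intro h
    by_contra hno
    push_neg at hno
    have hub : (⨆ (p : V) (q : V), gdist (layer6 w M) (p, 0) (q, 5)) ≤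
        ((50*M-1).toNat : ℕ∞) := by
      refine iSup₂_le fun p q => ?_
      by_cases hpq : p = q
      · subst hpq
        obtain ⟨u, z, h1, h2, h3, h4⟩ := hno p
        refine le_trans (ub_tri w M hM hbound p u z h1 h3 (Ne.symm h2)) ?_
        rw [Nat.cast_le]
        omega
      · refine le_trans (ub_ne w M p q hpq) ?_
        rw [Nat.cast_le]
        omega
    have h2 := le_trans h hub
    rw [Nat.cast_le] at h2
    omega
  · rintro ⟨v, htri⟩
    refine le_trans ?_ (le_iSup₂ (f := fun p q => gdist (layer6 w M) (p, 0) (q, 5)) v v)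
    exact le_iInf₂ fun p hp => walk_lb w M hM hbound v htri p hp
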